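/- For every integer i ≥ 1, B_{2^{i−1}−1} = {0, 1, 2, …, 2^i − 2}, and consequently b_{2^{i−1}−1} = 2^i − 1. -/
import Mathlib


/-- `Lessdot l₁ l₂ s` means `l₁ + l₂ ⋖ s`: for every bit position `i`,
the binary digits satisfy `(l₁)ᵢ + (l₂)ᵢ ≤ (s)ᵢ`. -/
def Lessdot (l₁ l₂ s : ℕ) : Prop :=
  ∀ i : ℕ, (l₁.testBit i).toNat + (l₂.testBit i).toNat ≤ (s.testBit i).toNat

open scoped Classical in
/-- `BSet r s = B_s^{(r)} = {2^r·l₁ + l₂ : l₁ + l₂ ⋖ s}`.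
(Note `l₁ + l₂ ⋖ s` forces `l₁, l₂ ≤ s`, so the ranges capture the whole set.) -/
noncomputable def BSet (r s : ℕ) : Finset ℕ :=
  ((Finset.range (s + 1) ×ˢ Finset.range (s + 1)).filter
    (fun p => Lessdot p.1 p.2 s)).image (fun p => 2 ^ r * p.1 + p.2)

/-- `Nnum r m = N_m^{(r)} = Σ_{s=0}^{2^m−1} |B_s^{(r)}|`. -/
noncomputable def Nnum (r m : ℕ) : ℕ := ∑ s ∈ Finset.range (2 ^ m), (BSet r s).card

lemma toNat_testBit_zero (a : ℕ) : (a.testBit 0).toNat = a % 2 := by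
  rw [Nat.testBit_zero]
  rcases Nat.mod_two_eq_zero_or_one a with h | h <;> simp [h]

lemma lessdot_add_le (s : ℕ) : ∀ a b, Lessdot a b s → a + b ≤ s := by
  induction s using Nat.strong_induction_on with
  | _ s ih =>
    intro a b h
    rcases Nat.eq_zero_or_pos s with rfl | hs
    · have ha : a = 0 := by
        apply Nat.eq_of_testBit_eq
        intro j
        have := h j
        simp only [Nat.zero_testBit, Bool.toNat_false] at this ⊢
        cases hb : a.testBit j <;> simp_all
      have hb : b = 0 := by
        apply Nat.eq_of_testBit_eq
        intro j
        have := h j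
        simp only [Nat.zero_testBit, Bool.toNat_false] at this ⊢
        cases hb : b.testBit j <;> simp_all
      omega
    · have hdiv : Lessdot (a / 2) (b / 2) (s / 2) := by
        intro j
        have := h (j + 1)
        simpa [Nat.testBit_succ] using this
      have h2 : a / 2 + b / 2 ≤ s / 2 := ih (s / 2) (by omega) _ _ hdiv
      have h0 : a % 2 + b % 2 ≤ s % 2 := by
        have := h 0
        rw [toNat_testBit_zero, toNat_testBit_zero, toNat_testBit_zero] at this
        exact this
      omega

lemma lessdot_of_add_eq (n : ℕ) : ∀ a b, a + b = 2 ^ n - 1 → Lessdot a b (2 ^ n - 1) := by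
  induction n with
  | zero =>
    intro a b hab
    have : a = 0 ∧ b = 0 := by omega
    obtain ⟨rfl, rfl⟩ := this
    intro j
    simp [Nat.zero_testBit]
  | succ n ih =>
    intro a b hab
    have hpow : (2:ℕ) ^ (n + 1) = 2 * 2 ^ n := by ring
    have hpos : (1:ℕ) ≤ 2 ^ n := Nat.one_le_two_pow
    have hmod : a % 2 + b % 2 = 1 := by
      have h1 : (a + b) % 2 = 1 := by
        rw [hab]
        omega
      omega
    have hdiv : a / 2 + b / 2 = 2 ^ n - 1 := by omega
    have hIH := ih _ _ hdiv
    intro j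
    cases j with
    | zero =>
      simp only [toNat_testBit_zero]
      omega
    | succ j =>
      rw [Nat.testBit_succ, Nat.testBit_succ, Nat.testBit_succ]
      have hq : (2 ^ (n + 1) - 1) / 2 = 2 ^ n - 1 := by omega
      rw [hq]
      exact hIH j

/-- For every integer `i ≥ 1`, `B_{2^{i−1}−1} = {0, 1, …, 2^i − 2}` and
consequently `b_{2^{i−1}−1} = 2^i − 1`. -/
theorem stmt_4 (i : ℕ) (hi : 1 ≤ i) :
    BSet 1 (2 ^ (i - 1) - 1) = Finset.range (2 ^ i - 1) ∧
      (BSet 1 (2 ^ (i - 1) - 1)).card = 2 ^ i - 1 := by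
  obtain ⟨n, rfl⟩ : ∃ n, i = n + 1 := ⟨i - 1, by omega⟩
  have hn : n + 1 - 1 = n := rfl
  rw [hn]
  set s := 2 ^ n - 1 with hs
  have hpos : (1:ℕ) ≤ 2 ^ n := Nat.one_le_two_pow
  have h2i : 2 ^ (n + 1) - 1 = 2 * s + 1 := by
    have : (2:ℕ) ^ (n + 1) = 2 * 2 ^ n := by ring
    omega
  have hmain : BSet 1 s = Finset.range (2 ^ (n + 1) - 1) := by
    ext k
    simp only [BSet, Finset.mem_image, Finset.mem_filter, Finset.mem_product,
      Finset.mem_range]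
    constructor
    · rintro ⟨⟨l₁, l₂⟩, ⟨⟨-, -⟩, hld⟩, rfl⟩
      have hle : l₁ + l₂ ≤ s := lessdot_add_le s l₁ l₂ hld
      rw [h2i]
      simp only [pow_one]
      omega
    · intro hk
      rw [h2i] at hk
      by_cases hks : k ≤ s
      · refine ⟨(0, k), ⟨⟨by omega, by omega⟩, ?_⟩, by simp⟩
        have hL : Lessdot k (s - k) s := by
          have := lessdot_of_add_eq n k (s - k) (by omega)
          rwa [← hs] at this
        intro j
        have := hL j
        simp only [Nat.zero_testBit, Bool.toNat_false]
        omega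
      · refine ⟨(k - s, 2 * s - k), ⟨⟨by omega, by omega⟩, ?_⟩, ?_⟩
        · have hL : Lessdot (k - s) (2 * s - k) s := by
            have := lessdot_of_add_eq n (k - s) (2 * s - k) (by omega)
            rwa [← hs] at this
          exact hL
        · simp only [pow_one]
          omega
  refine ⟨hmain, ?_⟩
  rw [hmain, Finset.card_range]
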